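/- Let A be a p-adically complete p-torsion-free O_C-algebra with topologically nilpotent non-zero-divisor e, ρ ∈ O_C with v_p(ρ) ≥ 1/(p−1), and α ∈ Z[1/p] ∩ (0,1). Let M_α = A[ρX]^∧_pd · e_α with γ acting by γ(X) = X + e and γ(e_α) = ζ^α e_α, where ζ^α is the corresponding root of unity (so ζ^α ≠ 1 and v_p(ζ^α − 1) ≤ 1/(p−1)). Then the γ-fixed points of M_α are zero, and (γ − 1)M_α = (ζ^α − 1)M_α, hence H^1 of the Koszul complex (M_α, γ − 1) is M_α/(ζ^α − 1)M_α. -/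

import Mathlib

open Filter Topology

set_option linter.unusedSectionVars false
set_option maxHeartbeats 1000000

section Aux
variable {A : Type*} [CommRing A] [UniformSpace A] [IsUniformAddGroup A]
  [IsTopologicalRing A] [CompleteSpace A] [T2Space A]

lemma aux_tsum_mem {ι : Type*} (S : Ideal A) (hS : IsClosed (S : Set A)) (f : ι → A)
    (h : ∀ n, f n ∈ S) : ∑' n, f n ∈ S := by
  by_cases hf : Summable f
  · exact hS.mem_of_tendsto hf.hasSum
      (Filter.Eventually.of_forall fun s => sum_mem fun i _ => h i)
  · rw [tsum_eq_zero_of_not_summable hf]; exact S.zero_mem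

lemma aux_summable {ι : Type*} {P : ℕ → Ideal A}
    (hbasis : ∀ s ∈ 𝓝 (0 : A), ∃ k, ((P k : Ideal A) : Set A) ⊆ s)
    (f : ι → A) (h : ∀ k, {n | f n ∉ P k}.Finite) : Summable f := by
  classical
  rw [summable_iff_cauchySeq_finset, cauchySeq_finset_iff_sum_vanishing]
  intro s hs
  obtain ⟨k, hk⟩ := hbasis s hs
  refine ⟨(h k).toFinset, fun t ht => hk ?_⟩
  refine sum_mem fun i hi => ?_
  by_contra hcon
  exact (Finset.disjoint_left.mp ht hi) ((h k).mem_toFinset.mpr hcon)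

lemma aux_ofDigits_zero (p : ℕ) (L : List ℕ) (h : ∀ x ∈ L, x = 0) : Nat.ofDigits p L = 0 := by
  induction L with
  | nil => simp [Nat.ofDigits]
  | cons d L ih =>
      simp only [Nat.ofDigits]
      rw [h d (List.mem_cons_self), ih fun x hx => h x (List.mem_cons_of_mem _ hx)]
      simp

end Aux


/-- With `A` a `p`-adically complete `p`-torsion-free `𝒪_C`-algebra,
`e` topologically nilpotent non-zero-divisor, `ρ` with `v_p(ρ) ≥ 1/(p−1)`, and
`α ∈ ℤ[1/p] ∩ (0,1)`, let `M_α = A[ρX]^∧_pd · e_α` with `γ(X) = X + e` and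
`γ(e_α) = ζ^α e_α`, where `ζ^α` is a nontrivial `p^r`-th root of unity with
`v_p(ζ^α − 1) ≤ v_p(ρ)` (encoded by `(ζ^α − 1) ∣ ρ`).  Then the `γ`-fixed points of
`M_α` vanish, and `(γ − 1)M_α = (ζ^α − 1)M_α`; hence `H¹` of the Koszul complex
`(M_α, γ−1)` is `M_α/(ζ^α − 1)M_α`. -/
theorem stmt_4 (p : ℕ) [Fact (Nat.Prime p)]
    (A : Type*) [CommRing A] [UniformSpace A] [IsUniformAddGroup A]
    [IsTopologicalRing A] [CompleteSpace A] [T2Space A]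
    [Algebra ℤ_[p] A]
    (hadic : IsAdic (Ideal.span {(p : A)}))
    (htor : ∀ x : A, (p : A) * x = 0 → x = 0)
    (ρ : A) (hρ : ∃ c : A, ρ ^ (p - 1) = (p : A) * c)
    (ρpd : ℕ → A) (hρpd0 : ρpd 0 = 1) (hρpd1 : ρpd 1 = ρ)
    (hρpdfac : ∀ m : ℕ, (m.factorial : A) * ρpd m = ρ ^ m)
    (e : A) (he : Tendsto (fun n : ℕ => e ^ n) atTop (𝓝 0))
    (hereg : ∀ x : A, e * x = 0 → x = 0)
    (r : ℕ) (hr : 1 ≤ r)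
    (ζα : A) (hζαroot : ζα ^ (p ^ r) = 1) (hζαne : ζα ≠ 1)
    (hζαreg : ∀ x : A, (ζα - 1) * x = 0 → x = 0)
    (hζαdvd : ∃ c : A, ρ = (ζα - 1) * c) :
    (∀ a : ℕ → A, Tendsto a atTop (𝓝 0) →
      ((∀ i : ℕ, ζα * (∑' m : ℕ, ρpd m * e ^ m * a (i + m)) = a i) ↔
        ∀ i : ℕ, a i = 0)) ∧
    (∀ b : ℕ → A, Tendsto b atTop (𝓝 0) →
      ((∃ a : ℕ → A, Tendsto a atTop (𝓝 0) ∧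
          ∀ i : ℕ, ζα * (∑' m : ℕ, ρpd m * e ^ m * a (i + m)) - a i = b i) ↔
        (∃ c : ℕ → A, Tendsto c atTop (𝓝 0) ∧ ∀ i : ℕ, b i = (ζα - 1) * c i))) := by
  obtain ⟨c₀, hc₀⟩ := hρ
  obtain ⟨c₁, hc₁⟩ := hζαdvd
  have hp : Nat.Prime p := Fact.out
  set z : A := ζα - 1 with hzdef
  -- cancellation lemmas
  have hpcan : ∀ x y : A, (p : A) * x = (p : A) * y → x = y := by
    intro x y hxy
    have h1 : (p : A) * (x - y) = 0 := by linear_combination hxy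
    exact sub_eq_zero.mp (htor _ h1)
  have hppowcan : ∀ (v : ℕ) (x y : A), (p : A) ^ v * x = (p : A) ^ v * y → x = y := by
    intro v
    induction v with
    | zero => intro x y h; simpa using h
    | succ v ih =>
        intro x y h
        refine ih x y (hpcan _ _ ?_)
        calc (p : A) * ((p : A) ^ v * x) = (p : A) ^ (v + 1) * x := by ring
          _ = (p : A) ^ (v + 1) * y := h
          _ = (p : A) * ((p : A) ^ v * y) := by ring
  have hzcan : ∀ x y : A, z * x = z * y → x = y := by
    intro x y hxy
    have h1 : z * (x - y) = 0 := by linear_combination hxy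
    exact sub_eq_zero.mp (hζαreg _ h1)
  -- adic topology facts
  set P : ℕ → Ideal A := fun k => (Ideal.span {(p : A)}) ^ k with hPdef
  obtain ⟨hPopen, hPbasis⟩ := isAdic_iff.mp hadic
  have hPnhds : ∀ k, ((P k : Ideal A) : Set A) ∈ 𝓝 (0 : A) :=
    fun k => (hPopen k).mem_nhds (P k).zero_mem
  have hPclosed : ∀ k, IsClosed ((P k : Ideal A) : Set A) := by
    intro k
    exact AddSubgroup.isClosed_of_isOpen (P k).toAddSubgroup (hPopen k)
  have htend : ∀ f : ℕ → A, Tendsto f atTop (𝓝 0) ↔ ∀ k, ∃ N, ∀ n ≥ N, f n ∈ P k := by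
    intro f
    constructor
    · intro hf k
      exact eventually_atTop.mp (hf.eventually_mem (hPnhds k))
    · intro hf
      intro s hs
      obtain ⟨k, hk⟩ := hPbasis s hs
      obtain ⟨N, hN⟩ := hf k
      exact mem_map.mpr (mem_of_superset (eventually_atTop.mpr ⟨N, fun n hn => hN n hn⟩)
        (fun x hx => hk hx))
  have hE : ∀ k, ∃ N, ∀ n ≥ N, e ^ n ∈ P k := (htend _).mp he
  have hzero_of_mem_all : ∀ x : A, (∀ k, x ∈ P k) → x = 0 := by
    intro x hx
    have h0 : (0 : A) ∈ closure ({x} : Set A) := by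
      rw [mem_closure_iff_nhds]
      intro t ht
      obtain ⟨k, hk⟩ := hPbasis t ht
      exact ⟨x, hk (hx k), rfl⟩
    rw [closure_singleton] at h0
    exact (Set.mem_singleton_iff.mp h0).symm
  -- p ^ r is divisible by z
  have hpr : ∃ w : A, ((p : A)) ^ r = z * w := by
    have hn2 : 2 ≤ p ^ r := by
      calc 2 ≤ p := hp.two_le
        _ = p ^ 1 := (pow_one p).symm
        _ ≤ p ^ r := Nat.pow_le_pow_right hp.pos hr
    set n : ℕ := p ^ r with hndef
    have hbin : (1 : A) = ∑ k ∈ Finset.range (n + 1), z ^ k * (n.choose k : A) := by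
      have : (z + 1) ^ n = ∑ k ∈ Finset.range (n + 1), z ^ k * 1 ^ (n - k) * (n.choose k : A) :=
        add_pow z 1 n
      simp only [one_pow, mul_one] at this
      calc (1 : A) = ζα ^ (p ^ r) := hζαroot.symm
        _ = (z + 1) ^ n := by rw [hzdef]; ring_nf; rw [hndef]
        _ = _ := this
    obtain ⟨n', hn'⟩ : ∃ n', n = n' + 2 := ⟨n - 2, by omega⟩
    rw [hn'] at hbin
    rw [Finset.sum_range_succ' _ (n' + 2)] at hbin
    rw [Finset.sum_range_succ' _ (n' + 1)] at hbin
    simp only [zero_add, pow_zero, one_mul, Nat.choose_zero_right, Nat.cast_one, pow_one,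
      Nat.choose_one_right] at hbin
    push_cast at hbin
    -- hbin : 1 = (∑ k in range (n'+1), z^(k+2) * choose) + z * (n:A) + 1
    have hz0 : z * ((∑ k ∈ Finset.range (n' + 1), z ^ (k + 1) * ((n' + 2).choose (k + 2) : A))
        + ((n' + 2 : ℕ) : A)) = 0 := by
      have hfact : ∀ k, z ^ (k + 1 + 1) * (((n' + 2).choose (k + 2) : ℕ) : A)
          = z * (z ^ (k + 1) * (((n' + 2).choose (k + 2) : ℕ) : A)) := by
        intro k; ring
      rw [mul_add, Finset.mul_sum]
      simp only [← hfact]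
      push_cast
      linear_combination -hbin
    have hthis := hζαreg _ hz0
    have hS : (∑ k ∈ Finset.range (n' + 1), z ^ (k + 1) * ((n' + 2).choose (k + 2) : A))
        = z * ∑ k ∈ Finset.range (n' + 1), z ^ k * ((n' + 2).choose (k + 2) : A) := by
      rw [Finset.mul_sum]
      exact Finset.sum_congr rfl fun k _ => by ring
    refine ⟨-(∑ k ∈ Finset.range (n' + 1), z ^ k * ((n' + 2).choose (k + 2) : A)), ?_⟩
    have hcast : ((p : A)) ^ r = ((n' + 2 : ℕ) : A) := by
      rw [← hn', hndef]; push_cast; ring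
    rw [hcast]
    push_cast at hthis hS ⊢
    linear_combination hthis - hS
  obtain ⟨w, hw⟩ := hpr
  -- divisibility of divided powers
  have hzdvd : ∀ m : ℕ, ∃ dm : A, ρpd (m + 1) = z * dm := by
    intro m
    set M : ℕ := m + 1 with hMdef
    have hM1 : 1 ≤ M := Nat.le_add_left 1 m
    set v : ℕ := (M.factorial).factorization p with hvdef
    set u : ℕ := M.factorial / p ^ v with hudef
    have hfac : p ^ v * u = M.factorial := Nat.ordProj_mul_ordCompl_eq_self M.factorial p
    have hu : ¬ p ∣ u := Nat.not_dvd_ordCompl hp (Nat.factorial_ne_zero M)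
    have hvval : v = padicValNat p M.factorial := Nat.factorization_def M.factorial hp
    -- (p-1) * v ≤ M - 1
    have hdig : 1 ≤ (p.digits M).sum := by
      by_contra hcon
      push_neg at hcon
      have hall : ∀ x ∈ p.digits M, x = 0 :=
        List.sum_eq_zero_iff.mp (by omega)
      have := aux_ofDigits_zero p _ hall
      rw [Nat.ofDigits_digits] at this
      omega
    have hvle : (p - 1) * v ≤ M - 1 := by
      have hleg := sub_one_mul_padicValNat_factorial (p := p) M
      rw [← hvval] at hleg
      omega
    set s : ℕ := M - (p - 1) * v with hsdef
    have hs1 : 1 ≤ s := by omega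
    have hsplit : (p - 1) * v + s = M := by omega
    -- in A
    have hA1 : (p : A) ^ v * ((u : A) * ρpd M) = (p : A) ^ v * (c₀ ^ v * ρ ^ s) := by
      have h1 : (p : A) ^ v * (u : A) = ((M.factorial : ℕ) : A) := by
        rw [← hfac]; push_cast; ring
      calc (p : A) ^ v * ((u : A) * ρpd M) = ((p : A) ^ v * (u : A)) * ρpd M := by ring
        _ = ((M.factorial : ℕ) : A) * ρpd M := by rw [h1]
        _ = ρ ^ M := hρpdfac M
        _ = ρ ^ ((p - 1) * v) * ρ ^ s := by rw [← pow_add, hsplit]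
        _ = ((p : A) * c₀) ^ v * ρ ^ s := by rw [pow_mul, hc₀]
        _ = (p : A) ^ v * (c₀ ^ v * ρ ^ s) := by rw [mul_pow]; ring
    have hA2 : (u : A) * ρpd M = c₀ ^ v * ρ ^ s := hppowcan v _ _ hA1
    -- z divides u * ρpd M and p ^ r
    have hdvd1 : z ∣ (u : A) * ρpd M := by
      rw [hA2]
      have : ρ ^ s = ρ ^ (s - 1) * (z * c₁) := by
        rw [← hc₁, ← pow_succ]
        congr 1
        omega
      rw [this]
      exact ⟨c₀ ^ v * ρ ^ (s - 1) * c₁, by ring⟩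
    have hdvd2 : z ∣ ((p : A)) ^ r := ⟨w, hw⟩
    -- Bezout
    have hcop : Nat.Coprime u (p ^ r) :=
      Nat.Coprime.pow_right r (Nat.coprime_comm.mp ((hp.coprime_iff_not_dvd).mpr hu))
    obtain ⟨a, b, hab⟩ := Nat.isCoprime_iff_coprime.mpr hcop
    have habA : (a : A) * (u : A) + (b : A) * ((p : A)) ^ r = 1 := by
      have := congrArg (fun t : ℤ => ((t : ℤ) : A)) hab
      push_cast at this
      convert this using 2 <;> push_cast <;> ring
    have : z ∣ ρpd M := by
      have h3 : ρpd M = (a : A) * ((u : A) * ρpd M) + (b : A) * ((p : A) ^ r * ρpd M) := by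
        calc ρpd M = ((a : A) * (u : A) + (b : A) * ((p : A)) ^ r) * ρpd M := by
              rw [habA]; ring
          _ = _ := by ring
      rw [h3]
      exact dvd_add (hdvd1.mul_left _) ((hdvd2.mul_right _).mul_left _)
    obtain ⟨dm, hdm⟩ := this
    exact ⟨dm, hdm⟩
  choose d hd using hzdvd
  -- summability helpers
  have hfin_of_N : ∀ {f : ℕ → A}, (∀ k, ∃ N, ∀ n ≥ N, f n ∈ P k) → Summable f := by
    intro f hf
    refine aux_summable hPbasis f fun k => ?_
    obtain ⟨N, hN⟩ := hf k
    exact (Set.finite_Iio N).subset fun n hn => lt_of_not_ge fun hge => hn (hN n hge)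
  have hSum1 : ∀ (a : ℕ → A) (i : ℕ), Summable (fun m => ρpd m * e ^ m * a (i + m)) := by
    intro a i
    refine hfin_of_N fun k => ?_
    obtain ⟨N, hN⟩ := hE k
    exact ⟨N, fun m hm => Ideal.mul_mem_right _ _ (Ideal.mul_mem_left _ _ (hN m hm))⟩
  have hSum2 : ∀ (a : ℕ → A) (i : ℕ), Summable (fun m => d m * e ^ (m + 1) * a (i + m + 1)) := by
    intro a i
    refine hfin_of_N fun k => ?_
    obtain ⟨N, hN⟩ := hE k
    exact ⟨N, fun m hm => Ideal.mul_mem_right _ _ (Ideal.mul_mem_left _ _ (hN (m + 1) (by omega)))⟩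
  -- the key identity
  have KEY : ∀ (a : ℕ → A) (i : ℕ),
      ζα * (∑' m : ℕ, ρpd m * e ^ m * a (i + m)) - a i
        = z * (a i + ζα * ∑' m : ℕ, d m * e ^ (m + 1) * a (i + m + 1)) := by
    intro a i
    have h1 : (∑' m : ℕ, ρpd m * e ^ m * a (i + m))
        = a i + ∑' m : ℕ, ρpd (m + 1) * e ^ (m + 1) * a (i + m + 1) := by
      rw [Summable.tsum_eq_zero_add (hSum1 a i)]
      simp only [hρpd0, pow_zero, one_mul, mul_one, add_zero, Nat.add_assoc]
    have h2 : ∀ m : ℕ, ρpd (m + 1) * e ^ (m + 1) * a (i + m + 1)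
        = z * (d m * e ^ (m + 1) * a (i + m + 1)) := fun m => by rw [hd m]; ring
    rw [h1, tsum_congr h2, (hSum2 a i).tsum_mul_left z]
    ring
  constructor
  · -- Part 1: fixed points vanish
    intro a ha
    constructor
    · intro hfix
      have h0 : ∀ i, a i = -(ζα * ∑' m : ℕ, d m * e ^ (m + 1) * a (i + m + 1)) := by
        intro i
        have hk := KEY a i
        rw [hfix i, sub_self] at hk
        have hz := hzcan (a i + ζα * ∑' m : ℕ, d m * e ^ (m + 1) * a (i + m + 1)) 0
          (by rw [mul_zero]; exact hk.symm)
        linear_combination hz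
      have hsmall : ∀ k i, a i ∈ P k := by
        intro k
        obtain ⟨N, hN⟩ := (htend a).mp ha k
        have main : ∀ j i, N ≤ i + j → a i ∈ P k := by
          intro j
          induction j with
          | zero => exact fun i hi => hN i (by omega)
          | succ j ih =>
              intro i hi
              rcases le_or_gt N (i + j) with h' | h'
              · exact ih i h'
              · rw [h0 i]
                refine neg_mem (Ideal.mul_mem_left _ _
                  (aux_tsum_mem _ (hPclosed k) _ fun m => ?_))
                exact Ideal.mul_mem_left _ _ (ih (i + m + 1) (by omega))
        exact fun i => main N i (by omega)
      exact fun i => hzero_of_mem_all _ fun k => hsmall k i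
    · intro h0 i
      have hz : ∀ m : ℕ, ρpd m * e ^ m * a (i + m) = 0 := fun m => by
        rw [h0 (i + m), mul_zero]
      rw [tsum_congr hz, tsum_zero, mul_zero, h0 i]
  · -- Part 2
    intro b hb
    constructor
    · rintro ⟨a, ha, hab⟩
      refine ⟨fun i => a i + ζα * ∑' m : ℕ, d m * e ^ (m + 1) * a (i + m + 1), ?_, ?_⟩
      · rw [htend _]
        intro k
        obtain ⟨N, hN⟩ := (htend a).mp ha k
        refine ⟨N, fun i hi => add_mem (hN i hi) (Ideal.mul_mem_left _ _
          (aux_tsum_mem _ (hPclosed k) _ fun m => Ideal.mul_mem_left _ _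
            (hN (i + m + 1) (by omega))))⟩
      · intro i
        rw [← hab i, KEY a i]
    · rintro ⟨c, hc, hbc⟩
      -- closures of the ideals generated by powers of e
      set Q : ℕ → Ideal A := fun n => (Ideal.span {e ^ n}).topologicalClosure with hQdef
      have hQclosed : ∀ n, IsClosed ((Q n : Ideal A) : Set A) := fun n =>
        Submodule.isClosed_topologicalClosure _
      have hQsub : ∀ k n, e ^ n ∈ P k → ∀ y : A, y ∈ Q n → y ∈ P k := by
        intro k n hn
        have hle : Ideal.span {e ^ n} ≤ P k := Ideal.span_le.mpr (by simpa using hn)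
        exact fun y hy => Submodule.topologicalClosure_minimal _ hle (hPclosed k) hy
      have hmap : ∀ (n m : ℕ) (y : A), y ∈ Q n → d m * e ^ (m + 1) * y ∈ Q (n + 1) := by
        intro n m y hy
        have hcont : Continuous fun y : A => d m * e ^ (m + 1) * y := continuous_mul_left _
        have hmaps : Set.MapsTo (fun y : A => d m * e ^ (m + 1) * y)
            ((Ideal.span {e ^ n} : Ideal A) : Set A)
            ((Ideal.span {e ^ (n + 1)} : Ideal A) : Set A) := by
          intro y hy
          rw [SetLike.mem_coe, Ideal.mem_span_singleton] at hy ⊢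
          obtain ⟨t, rfl⟩ := hy
          exact ⟨d m * e ^ m * t, by ring⟩
        have hy' : y ∈ closure ((Ideal.span {e ^ n} : Ideal A) : Set A) := by
          rw [← Submodule.topologicalClosure_coe]
          exact hy
        have h2 := hmaps.closure hcont hy'
        show d m * e ^ (m + 1) * y ∈ (Ideal.span {e ^ (n + 1)}).topologicalClosure
        rw [← SetLike.mem_coe, Submodule.topologicalClosure_coe]
        exact h2
      -- recursively defined approximations
      let x : ℕ → ℕ → A := fun n => Nat.rec c
        (fun _ xn i => -(ζα * ∑' m : ℕ, d m * e ^ (m + 1) * xn (i + m + 1))) n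
      have hx0 : ∀ i, x 0 i = c i := fun _ => rfl
      have hxs : ∀ n i, x (n + 1) i
          = -(ζα * ∑' m : ℕ, d m * e ^ (m + 1) * x n (i + m + 1)) := fun _ _ => rfl
      have hxQ : ∀ n i, x n i ∈ Q n := by
        intro n
        induction n with
        | zero =>
            intro i
            refine Submodule.le_topologicalClosure _ ?_
            rw [pow_zero, Ideal.span_singleton_one]
            trivial
        | succ n ih =>
            intro i
            rw [hxs]
            exact neg_mem (Ideal.mul_mem_left _ _
              (aux_tsum_mem _ (hQclosed (n + 1)) _ fun m => hmap n m _ (ih (i + m + 1))))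
      have hxnull : ∀ n, Tendsto (x n) atTop (𝓝 0) := by
        intro n
        induction n with
        | zero => exact hc
        | succ n ih =>
            rw [htend _]
            intro k
            obtain ⟨N, hN⟩ := (htend (x n)).mp ih k
            refine ⟨N, fun i hi => ?_⟩
            rw [hxs]
            exact neg_mem (Ideal.mul_mem_left _ _
              (aux_tsum_mem _ (hPclosed k) _ fun m => Ideal.mul_mem_left _ _
                (hN (i + m + 1) (by omega))))
      have hxsum : ∀ i, Summable fun n => x n i := by
        intro i
        refine hfin_of_N fun k => ?_
        obtain ⟨N, hN⟩ := hE k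
        exact ⟨N, fun n hn => hQsub k n (hN n hn) _ (hxQ n i)⟩
      let a : ℕ → A := fun i => ∑' n, x n i
      have hanull : Tendsto a atTop (𝓝 0) := by
        rw [htend _]
        intro k
        obtain ⟨N₁, hN₁⟩ := hE k
        choose Nn hNn using fun n => (htend (x n)).mp (hxnull n) k
        refine ⟨(Finset.range N₁).sup Nn, fun i hi =>
          aux_tsum_mem _ (hPclosed k) _ fun n => ?_⟩
        rcases lt_or_ge n N₁ with h' | h'
        · exact hNn n i (le_trans (Finset.le_sup (Finset.mem_range.mpr h')) hi)
        · exact hQsub k n (hN₁ n h') _ (hxQ n i)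
      have hFa : ∀ i, a i + ζα * ∑' m : ℕ, d m * e ^ (m + 1) * a (i + m + 1) = c i := by
        intro i
        set t : ℕ → ℕ → A := fun m n => d m * e ^ (m + 1) * x n (i + m + 1) with htdef
        have hunc : Summable (Function.uncurry t) := by
          refine aux_summable hPbasis _ fun k => ?_
          obtain ⟨N, hN⟩ := hE k
          refine ((Set.finite_Iio N).prod (Set.finite_Iio N)).subset fun q hq => ?_
          rcases q with ⟨m, n⟩
          simp only [Set.mem_setOf_eq] at hq
          by_contra hcon
          simp only [Set.mem_prod, Set.mem_Iio, not_and_or, not_lt] at hcon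
          rcases hcon with h' | h'
          · exact hq (Ideal.mul_mem_right _ _ (Ideal.mul_mem_left _ _ (hN (m + 1) (by omega))))
          · exact hq (Ideal.mul_mem_left _ _ (hQsub k n (hN n h') _ (hxQ n _)))
        have hrow : ∀ m, Summable fun n => t m n := fun m =>
          (hxsum (i + m + 1)).mul_left _
        have hcol : ∀ n, Summable fun m => t m n := fun n => hSum2 (x n) i
        have hDz : Summable fun n => ∑' m, t m n := by
          refine hfin_of_N fun k => ?_
          obtain ⟨N, hN⟩ := hE k
          refine ⟨N, fun n hn => ?_⟩
          refine hQsub k (n + 1) (hN (n + 1) (by omega)) _ ?_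
          exact aux_tsum_mem _ (hQclosed (n + 1)) _ fun m => hmap n m _ (hxQ n _)
        have step1 : (∑' m : ℕ, d m * e ^ (m + 1) * a (i + m + 1))
            = ∑' m : ℕ, ∑' n : ℕ, t m n :=
          tsum_congr fun m => ((hxsum (i + m + 1)).tsum_mul_left (d m * e ^ (m + 1))).symm
        have step2 : (∑' m : ℕ, ∑' n : ℕ, t m n) = ∑' n : ℕ, ∑' m : ℕ, t m n :=
          (Summable.tsum_comm' hunc hrow hcol).symm
        have step5 : (ζα * ∑' n : ℕ, ∑' m : ℕ, t m n) = c i - a i := by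
          rw [← hDz.tsum_mul_left ζα]
          have h5 : ∀ n, ζα * (∑' m : ℕ, t m n) = -(x (n + 1) i) := fun n => by
            rw [hxs, neg_neg]
          rw [tsum_congr h5, tsum_neg]
          have h7 : a i = x 0 i + ∑' n, x (n + 1) i := Summable.tsum_eq_zero_add (hxsum i)
          rw [hx0 i] at h7
          linear_combination h7
        rw [step1, step2, step5]
        ring
      refine ⟨a, hanull, fun i => ?_⟩
      rw [KEY a i, hFa i, hbc i]
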